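/- Let 1 ≤ s ≤ n, i ∈ W_{n,s} and d ≥ s + 1 − p_{λ^∨}(s). Then the polynomial h_d(u_i) vanishes under the evaluation u_1 = u_2 = ⋯ = u_n = 1. -/

import Mathlib

open MvPolynomial Finset

/-- The `k`-th elementary symmetric polynomial in the variables indexed by `T ⊆ {1,…,n}`. -/
noncomputable def esymmOn (n : ℕ) (T : Finset (Fin n)) (k : ℕ) : MvPolynomial (Fin n) ℤ :=
  ∑ A ∈ T.powersetCard k, ∏ i ∈ A, X i

/-- The dual-partition value `η_j = #{i : λ_i ≥ j}` (here `lam` is 0-indexed). -/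
def eta (l : ℕ) (lam : ℕ → ℕ) (j : ℕ) : ℕ :=
  ((Finset.range l).filter fun i => j ≤ lam i).card

/-- `p_{λ^∨}(s) = η_{n-s+1} + ⋯ + η_n`. -/
def pdual (n l : ℕ) (lam : ℕ → ℕ) (s : ℕ) : ℕ :=
  ∑ j ∈ Finset.Icc (n - s + 1) n, eta l lam j

/-- The generator `h_d(u_i)` of the K-theoretic Tanisaki ideal, for index set `T` and `q`. -/
noncomputable def hpoly (n : ℕ) (T : Finset (Fin n)) (q d : ℕ) : MvPolynomial (Fin n) ℤ :=
  if q = 0 then esymmOn n T d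
  else ∑ k ∈ Finset.range (d + 1),
    MvPolynomial.C ((-1 : ℤ) ^ (d - k) * ((q + d - k - 1).choose (q - 1) : ℤ)) * esymmOn n T k

/-- The K-theoretic Tanisaki ideal `𝓘_λ`. -/
noncomputable def KTanisaki (n l : ℕ) (lam : ℕ → ℕ) : Ideal (MvPolynomial (Fin n) ℤ) :=
  Ideal.span {p | ∃ s : ℕ, 1 ≤ s ∧ s ≤ n ∧ ∃ T : Finset (Fin n), T.card = s ∧
    ∃ d : ℕ, s + 1 - pdual n l lam s ≤ d ∧ p = hpoly n T (pdual n l lam s) d}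

/-- The (cohomological) Tanisaki ideal `I_λ`. -/
noncomputable def Tanisaki (n l : ℕ) (lam : ℕ → ℕ) : Ideal (MvPolynomial (Fin n) ℤ) :=
  Ideal.span {p | ∃ s : ℕ, 1 ≤ s ∧ s ≤ n ∧ ∃ T : Finset (Fin n), T.card = s ∧
    ∃ d : ℕ, s + 1 - pdual n l lam s ≤ d ∧ p = esymmOn n T d}


private lemma multichoose_negSucc (m k : ℕ) :
    Ring.multichoose (Int.negSucc m) k = (-1) ^ k * ((m + 1).choose k : ℤ) := by
  show Int.multichoose (Int.negSucc m) k = _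
  simp [Int.multichoose, Int.coe_negOnePow_natCast]

private lemma choose_neg_nat (q j : ℕ) (hq : 1 ≤ q) :
    Ring.choose (-(q : ℤ)) j = (-1) ^ j * ((q + j - 1).choose (q - 1) : ℤ) := by
  cases j with
  | zero =>
    simp [Ring.choose_zero_right, Nat.choose_self]
  | succ j =>
    have h1 : -(q : ℤ) - ((j + 1 : ℕ) : ℤ) + 1 = Int.negSucc (q + j - 1) := by
      rw [Int.negSucc_eq]; push_cast; omega
    have h2 : Ring.choose (-(q : ℤ)) (j + 1)
        = Ring.multichoose (-(q : ℤ) - ((j + 1 : ℕ) : ℤ) + 1) (j + 1) := rfl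
    rw [h2, h1, multichoose_negSucc]
    have h3 : q + j - 1 + 1 = q + j := by omega
    have h4 : (q + j).choose (j + 1) = (q + (j + 1) - 1).choose (q - 1) := by
      have h5 : q + (j + 1) - 1 = q + j := by omega
      rw [h5, ← Nat.choose_symm (by omega : j + 1 ≤ q + j)]
      congr 1
      omega
    rw [h3, h4]

private lemma eval_one_esymmOn (n : ℕ) (T : Finset (Fin n)) (k : ℕ) :
    MvPolynomial.eval (fun _ => (1 : ℤ)) (esymmOn n T k) = (T.card.choose k : ℤ) := by
  simp [esymmOn, Finset.card_powersetCard]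

private lemma pdual_le (n l : ℕ) (lam : ℕ → ℕ) (hn : 1 ≤ n)
    (hmono : ∀ i j : ℕ, i ≤ j → lam j ≤ lam i)
    (hsum : ∑ i ∈ Finset.range l, lam i = n)
    (s : ℕ) (hs1 : 1 ≤ s) (hsn : s ≤ n) :
    pdual n l lam s ≤ s := by
  have hlam_le : ∀ i ∈ Finset.range l, lam i ≤ n := by
    intro i hi
    rw [← hsum]
    exact Finset.single_le_sum (fun _ _ => Nat.zero_le _) hi
  set a := n - s with ha
  -- Step 1: rewrite pdual as a sum over parts
  have hstep1 : pdual n l lam s = ∑ i ∈ Finset.range l, (lam i - a) := by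
    unfold pdual eta
    simp only [Finset.card_filter]
    rw [Finset.sum_comm]
    refine Finset.sum_congr rfl ?_
    intro i hi
    rw [← Finset.card_filter]
    have hfe : (Finset.Icc (n - s + 1) n).filter (fun j => j ≤ lam i)
        = Finset.Icc (n - s + 1) (lam i) := by
      ext j
      simp only [Finset.mem_filter, Finset.mem_Icc]
      have := hlam_le i hi
      omega
    rw [hfe, Nat.card_Icc]
    omega
  rw [hstep1]
  -- Step 2: bound the sum
  have hl0 : 0 < l := by
    rcases Nat.eq_zero_or_pos l with h | h
    · exfalso; rw [h] at hsum; simp at hsum; omega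
    · exact h
  have hsplit : ∑ i ∈ Finset.range l, (lam i - a) + ∑ i ∈ Finset.range l, min (lam i) a = n := by
    rw [← Finset.sum_add_distrib, ← hsum]
    refine Finset.sum_congr rfl ?_
    intro i _
    exact Nat.sub_add_min_cancel (lam i) a
  have hM : a ≤ ∑ i ∈ Finset.range l, min (lam i) a := by
    by_cases hc : a ≤ lam 0
    · calc a = min (lam 0) a := (min_eq_right hc).symm
        _ ≤ ∑ i ∈ Finset.range l, min (lam i) a :=
          Finset.single_le_sum (f := fun i => min (lam i) a) (fun _ _ => Nat.zero_le _) (Finset.mem_range.mpr hl0)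
    · push_neg at hc
      have : ∑ i ∈ Finset.range l, min (lam i) a = ∑ i ∈ Finset.range l, lam i := by
        refine Finset.sum_congr rfl ?_
        intro i _
        have := hmono 0 i (Nat.zero_le i)
        omega
      rw [this, hsum]; omega
  omega

/-- For 1 ≤ s ≤ n, i ∈ W_{n,s} and d ≥ s + 1 − p_{λ^∨}(s), the polynomial
h_d(u_i) vanishes under the evaluation u_1 = ⋯ = u_n = 1. -/
theorem hpoly_eval_one_eq_zero
    (n l : ℕ) (lam : ℕ → ℕ) (hn : 1 ≤ n)
    (hmono : ∀ i j : ℕ, i ≤ j → lam j ≤ lam i)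
    (hpos : ∀ i < l, 0 < lam i) (hzero : ∀ i, l ≤ i → lam i = 0)
    (hsum : ∑ i ∈ Finset.range l, lam i = n)
    (s : ℕ) (hs1 : 1 ≤ s) (hsn : s ≤ n)
    (T : Finset (Fin n)) (hT : T.card = s)
    (d : ℕ) (hd : s + 1 - pdual n l lam s ≤ d) :
    MvPolynomial.eval (fun _ => (1 : ℤ)) (hpoly n T (pdual n l lam s) d) = 0 := by
  set q := pdual n l lam s with hqdef
  have hqs : q ≤ s := pdual_le n l lam hn hmono hsum s hs1 hsn
  by_cases hq0 : q = 0
  · rw [hpoly, if_pos hq0, eval_one_esymmOn, hT]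
    have : s < d := by omega
    rw [Nat.choose_eq_zero_of_lt this]
    simp
  · have hq1 : 1 ≤ q := Nat.one_le_iff_ne_zero.mpr hq0
    rw [hpoly, if_neg hq0]
    rw [map_sum]
    simp only [map_mul, MvPolynomial.eval_C, eval_one_esymmOn, hT]
    have hterm : ∀ k ∈ Finset.range (d + 1),
        (-1 : ℤ) ^ (d - k) * ((q + d - k - 1).choose (q - 1) : ℤ) * (s.choose k : ℤ)
        = Ring.choose ((s : ℕ) : ℤ) k * Ring.choose (-(q : ℤ)) (d - k) := by
      intro k hk
      rw [Finset.mem_range] at hk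
      rw [choose_neg_nat q (d - k) hq1, Ring.choose_natCast]
      have : q + (d - k) - 1 = q + d - k - 1 := by omega
      rw [this]
      ring
    rw [Finset.sum_congr rfl hterm]
    rw [← Finset.Nat.sum_antidiagonal_eq_sum_range_succ_mk
      (fun ij => Ring.choose ((s : ℕ) : ℤ) ij.1 * Ring.choose (-(q : ℤ)) ij.2)]
    rw [← Ring.add_choose_eq d (Commute.all _ _)]
    have hcast : ((s : ℕ) : ℤ) + -(q : ℤ) = (((s - q : ℕ)) : ℤ) := by push_cast; omega
    rw [hcast, Ring.choose_natCast, Nat.choose_eq_zero_of_lt (by omega)]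
    simp
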